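/- Let P be an exponentially localized orthogonal projection on L²(ℝ²) admitting a generalized Wannier basis {w_{γ,a}}_{γ∈𝔇, 1≤a≤m(γ)} which is s-localized around an r-uniformly discrete set 𝔇 ⊂ ℝ² for some s > 5. Then there exists a constant I_MI > 0 such that for every L ≥ 1: ∑_{ξ ∈ 𝔇 \ Λ_L} ∑_{1≤c≤m(ξ)} ‖χ_{Λ_L} w_{ξ,c}‖_{L²(ℝ²)} ≤ I_MI · L, where Λ_L = [−L,L]² and χ_{Λ_L} is the characteristic function of Λ_L. -/

import Mathlib

open MeasureTheory Filter Topology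

noncomputable section

abbrev R2 : Type := EuclideanSpace ℝ (Fin 2)

abbrev H2 : Type := MeasureTheory.Lp ℂ 2 (volume : Measure R2)

/-- `T` is an integral operator with kernel `k`. -/
def HasKernel (T : H2 →L[ℂ] H2) (k : R2 → R2 → ℂ) : Prop :=
  ∀ f : H2, ∀ᵐ x : R2 ∂volume, (T f : R2 → ℂ) x = ∫ y : R2, k x y * (f : R2 → ℂ) y

/-- `P` is an orthogonal projection. -/
def IsOrthProj (P : H2 →L[ℂ] H2) : Prop := IsSelfAdjoint P ∧ P ∘L P = P

/-- `p` is a jointly continuous, exponentially localized kernel with constants `C`, `β`. -/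
def IsExpLocKernel (p : R2 → R2 → ℂ) (C β : ℝ) : Prop :=
  Continuous (fun q : R2 × R2 => p q.1 q.2) ∧ 0 < C ∧ 0 < β ∧
    ∀ x y : R2, ‖p x y‖ ≤ C * Real.exp (-β * ‖x - y‖)

/-- Hilbert-Schmidt operators on `L²(ℝ²)`. -/
def IsHilbertSchmidt (T : H2 →L[ℂ] H2) : Prop :=
  ∃ (w : Set H2) (b : HilbertBasis w ℂ H2), Summable fun i => ‖T (b i)‖ ^ 2

/-- Trace class operators, characterized as products of two Hilbert-Schmidt operators. -/
def IsTraceClass (T : H2 →L[ℂ] H2) : Prop :=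
  ∃ A B : H2 →L[ℂ] H2, IsHilbertSchmidt A ∧ IsHilbertSchmidt B ∧ T = A ∘L B

def traceBasisIdx : Set H2 := (exists_hilbertBasis ℂ H2).choose

def traceBasis : HilbertBasis traceBasisIdx ℂ H2 := (exists_hilbertBasis ℂ H2).choose_spec.choose

/-- The trace of an operator, computed in a fixed Hilbert basis of `L²(ℝ²)`.
For trace class operators this is the canonical trace for any choice of basis. -/
def opTrace (T : H2 →L[ℂ] H2) : ℂ :=
  ∑' i : traceBasisIdx, (inner ℂ (traceBasis i) (T (traceBasis i)) : ℂ)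

/-- The square `Λ_L = [-L, L]²` in `ℝ²`. -/
def Lam (L : ℝ) : Set R2 := {x : R2 | |x 0| ≤ L ∧ |x 1| ≤ L}

/-- The characteristic function of `Λ_L`, with values in `ℂ`. -/
def indL (L : ℝ) (x : R2) : ℂ := (Lam L).indicator (fun _ => (1 : ℂ)) x

/-- Formal composition of two integral kernels. -/
def kComp (k₁ k₂ : R2 → R2 → ℂ) : R2 → R2 → ℂ := fun x y => ∫ z : R2, k₁ x z * k₂ z y

/-- The kernel of the commutator `[X_i, P]`, when `P` has kernel `p`. -/
def commK (p : R2 → R2 → ℂ) (i : Fin 2) : R2 → R2 → ℂ :=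
  fun x y => ((x i - y i : ℝ) : ℂ) * p x y

/-- The kernel of the double commutator `[[X₁,P],[X₂,P]]`, when `P` has kernel `p`. -/
def dcommK (p : R2 → R2 → ℂ) : R2 → R2 → ℂ :=
  fun x y => kComp (commK p 0) (commK p 1) x y - kComp (commK p 1) (commK p 0) x y

/-- The kernel of `i χ_{Λ_L} P [[X₁,P],[X₂,P]] P χ_{Λ_L}`, when `P` has kernel `p`. -/
def chernK (p : R2 → R2 → ℂ) (L : ℝ) : R2 → R2 → ℂ :=
  fun x y => indL L x * (Complex.I * kComp p (kComp (dcommK p) p) x y) * indL L y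

/-- A set `𝔇 ⊆ ℝ²` is `r`-uniformly discrete. -/
def UnifDiscrete (𝔇 : Set R2) (r : ℝ) : Prop :=
  0 < r ∧ ∀ x : R2, (𝔇 ∩ Metric.ball x r).Subsingleton

/-- The index set of a generalized Wannier basis. -/
abbrev WIdx (𝔇 : Set R2) (m : R2 → ℕ) : Type := Σ γ : 𝔇, Fin (m (γ : R2))

/-- `w` is a generalized Wannier basis for `P`, `G`-localized around `𝔇`
with localization constant `M` and uniform multiplicity bound `mStar`. -/
def IsGWB (P : H2 →L[ℂ] H2) (𝔇 : Set R2) (m : R2 → ℕ) (mStar : ℕ)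
    (w : (γ : R2) → Fin (m γ) → H2) (G : ℝ → ℝ) (M : ℝ) : Prop :=
  (∀ γ ∈ 𝔇, m γ ≤ mStar) ∧
  Orthonormal ℂ (fun σ : WIdx 𝔇 m => w (σ.1 : R2) σ.2) ∧
  (∀ γ ∈ 𝔇, ∀ a, P (w γ a) = w γ a) ∧
  (∀ f : H2, P f = f → (∀ (γ : R2), γ ∈ 𝔇 → ∀ a, (inner ℂ (w γ a) f : ℂ) = 0) → f = 0) ∧
  (∀ γ ∈ 𝔇, ∀ a, ∫⁻ x : R2,
      (‖(w γ a : R2 → ℂ) x‖₊ : ENNReal) ^ 2 * ENNReal.ofReal (G ‖x - γ‖)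
      ≤ ENNReal.ofReal M)

/-- The Japanese bracket `⟨x⟩ = (1+‖x‖²)^{1/2}` on `ℝ²`. -/
def jap (x : R2) : ℝ := Real.sqrt (1 + ‖x‖ ^ 2)

/-- The Japanese bracket `⟨t⟩ = (1+t²)^{1/2}` on `ℝ`. -/
def japR (t : ℝ) : ℝ := Real.sqrt (1 + t ^ 2)

/- ===== Auxiliary lemmas for statement_11 ===== -/

lemma sum_comp_le' {α β : Type*} [DecidableEq β] (S : Finset α) (g : α → β)
    (f c : β → ℝ) (hf : ∀ b, 0 ≤ f b)
    (hc : ∀ b ∈ S.image g, ((S.filter (fun a => g a = b)).card : ℝ) ≤ c b) :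
    ∑ a ∈ S, f (g a) ≤ ∑ b ∈ S.image g, c b * f b := by
  rw [← Finset.sum_fiberwise_of_maps_to (fun a ha => Finset.mem_image_of_mem g ha)
    (fun a => f (g a))]
  apply Finset.sum_le_sum
  intro b hb
  have h1 : ∑ a ∈ S.filter (fun a => g a = b), f (g a)
      = ((S.filter (fun a => g a = b)).card : ℝ) * f b := by
    rw [Finset.sum_congr rfl (fun a ha => by rw [(Finset.mem_filter.mp ha).2]),
      Finset.sum_const, nsmul_eq_mul]
  rw [h1]
  exact mul_le_mul_of_nonneg_right (hc b hb) (hf b)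

lemma max_ge_aux' {r u : ℝ} (hr0 : 0 < r) (hr1 : r ≤ 1) (hu : 0 < u) :
    r / 8 * (1 + u) ≤ max 1 (1 - r + r / 2 * u) := by
  rcases le_or_gt u 4 with h | h
  · exact le_trans (by nlinarith) (le_max_left _ _)
  · exact le_trans (by nlinarith) (le_max_right _ _)

lemma floor_cell' {h x : ℝ} (hh : 0 < h) :
    (⌊x / h⌋ : ℝ) * h ≤ x ∧ x < ((⌊x / h⌋ : ℝ) + 1) * h := by
  constructor
  · have := Int.floor_le (x / h)
    calc (⌊x / h⌋ : ℝ) * h ≤ (x / h) * h := by nlinarith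
    _ = x := by field_simp
  · have := Int.lt_floor_add_one (x / h)
    calc x = (x / h) * h := by field_simp
    _ < ((⌊x / h⌋ : ℝ) + 1) * h := by nlinarith

lemma same_cell' {h x y : ℝ} (hh : 0 < h) (e : ⌊x / h⌋ = ⌊y / h⌋) : |x - y| < h := by
  obtain ⟨a1, a2⟩ := floor_cell' (x := x) hh
  obtain ⟨b1, b2⟩ := floor_cell' (x := y) hh
  rw [e] at a1 a2
  rw [abs_sub_lt_iff]; constructor <;> linarith

lemma abs_le_cell' {h x : ℝ} (hh : 0 < h) :
    |x| ≤ ((⌊x / h⌋.natAbs : ℝ) + 1) * h := by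
  obtain ⟨a1, a2⟩ := floor_cell' (x := x) hh
  have hn : ((⌊x / h⌋.natAbs : ℝ)) = |(⌊x / h⌋ : ℝ)| := by
    rw [Nat.cast_natAbs, Int.cast_abs]
  rw [abs_le]; constructor
  · have : -(|(⌊x / h⌋ : ℝ)| + 1) * h ≤ (⌊x / h⌋ : ℝ) * h := by
      have := neg_abs_le ((⌊x / h⌋ : ℝ)); nlinarith
    rw [hn]; nlinarith
  · have : ((⌊x / h⌋ : ℝ) + 1) * h ≤ (|(⌊x / h⌋ : ℝ)| + 1) * h := by
      have := le_abs_self ((⌊x / h⌋ : ℝ)); nlinarith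
    rw [hn]; linarith

lemma cell_le_abs' {h x : ℝ} (hh : 0 < h) :
    ((⌊x / h⌋.natAbs : ℝ) - 1) * h ≤ |x| := by
  obtain ⟨a1, a2⟩ := floor_cell' (x := x) hh
  have hn : ((⌊x / h⌋.natAbs : ℝ)) = |(⌊x / h⌋ : ℝ)| := by
    rw [Nat.cast_natAbs, Int.cast_abs]
  rw [hn]
  rcases le_or_gt 0 (⌊x / h⌋ : ℝ) with hi | hi
  · rw [abs_of_nonneg hi]
    have : (⌊x / h⌋ : ℝ) * h ≤ |x| := le_trans a1 (le_abs_self x)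
    nlinarith
  · rw [abs_of_neg hi]
    have hi' : ⌊x / h⌋ + 1 ≤ 0 := by
      have : ⌊x / h⌋ < 0 := by exact_mod_cast hi
      omega
    have hi'' : (⌊x / h⌋ : ℝ) + 1 ≤ 0 := by exact_mod_cast hi'
    have hx0 : x < 0 := by nlinarith
    rw [abs_of_neg hx0]; nlinarith

def Sig4 : ℝ := ∑' n : ℕ, ((n : ℝ) + 1)⁻¹ ^ 4

lemma summable_f4 : Summable (fun n : ℕ => ((n : ℝ) + 1)⁻¹ ^ 4) := by
  have h : Summable (fun n : ℕ => 1 / (n : ℝ) ^ 4) :=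
    Real.summable_one_div_nat_pow.mpr (by norm_num)
  have h2 := (summable_nat_add_iff 1).mpr h
  apply h2.congr
  intro n
  push_cast
  rw [one_div, inv_pow]

lemma Sig4_nonneg : 0 ≤ Sig4 := tsum_nonneg (fun n => by positivity)

lemma tail_bound' {r L : ℝ} (hr0 : 0 < r) (hr1 : r ≤ 1) (hL : 1 ≤ L)
    (J : Finset ℕ) (hJ : ∀ k ∈ J, L < ((k : ℝ) + 1) * (r / 2)) :
    ∑ k ∈ J, (2 * (k : ℝ) + 1) * (max 1 (1 + r / 2 * ((k : ℝ) - 1) - L))⁻¹ ^ 5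
      ≤ 4 * L / r * (8 / r) ^ 5 * Sig4 := by
  set a : ℝ := 2 * L / r with ha
  have ha2 : 2 ≤ a := by rw [ha, le_div_iff₀ hr0]; nlinarith
  set k₀ : ℕ := ⌈a⌉₊ - 1 with hk₀
  have hceil : 1 ≤ ⌈a⌉₊ := by
    have : (0:ℝ) < a := by linarith
    exact Nat.one_le_ceil_iff.mpr this
  have hk₀c : (k₀ : ℝ) + 1 = (⌈a⌉₊ : ℝ) := by
    rw [hk₀]; push_cast [Nat.cast_sub hceil]; ring
  have hkk₀ : ∀ k ∈ J, k₀ ≤ k := by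
    intro k hk
    have h1 : a < (k : ℝ) + 1 := by
      have := hJ k hk
      rw [ha, div_lt_iff₀ hr0]; nlinarith
    have : ⌈a⌉₊ ≤ k + 1 := Nat.ceil_le.mpr (by push_cast; linarith)
    omega
  have hpt : ∀ k ∈ J, (2 * (k : ℝ) + 1) * (max 1 (1 + r / 2 * ((k : ℝ) - 1) - L))⁻¹ ^ 5
      ≤ 4 * L / r * (8 / r) ^ 5 * ((((k - k₀ : ℕ) : ℝ) + 1)⁻¹ ^ 4) := by
    intro k hk
    set u : ℝ := (k : ℝ) + 1 - a with hu
    have hu0 : 0 < u := by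
      have h1 : a < (k : ℝ) + 1 := by
        have := hJ k hk
        rw [ha, div_lt_iff₀ hr0]; nlinarith
      linarith
    have hnu : ((k - k₀ : ℕ) : ℝ) ≤ u := by
      rw [Nat.cast_sub (hkk₀ k hk), hu]
      have := Nat.le_ceil a
      linarith [hk₀c]
    have harg : 1 + r / 2 * ((k : ℝ) - 1) - L = 1 - r + r / 2 * u := by
      rw [hu, ha]; field_simp; ring
    have hmax : r / 8 * (1 + u) ≤ max 1 (1 + r / 2 * ((k : ℝ) - 1) - L) := by
      rw [harg]; exact max_ge_aux' hr0 hr1 hu0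
    have hinv : (max 1 (1 + r / 2 * ((k : ℝ) - 1) - L))⁻¹ ≤ (r / 8 * (1 + u))⁻¹ := by
      apply inv_anti₀ (by positivity) hmax
    have h5 : (max 1 (1 + r / 2 * ((k : ℝ) - 1) - L))⁻¹ ^ 5 ≤ (r / 8 * (1 + u))⁻¹ ^ 5 :=
      pow_le_pow_left₀ (by positivity) hinv 5
    have hcoef : 2 * (k : ℝ) + 1 ≤ 2 * a * (1 + u) := by
      rw [hu]; nlinarith
    have step1 : (2 * (k : ℝ) + 1) * (max 1 (1 + r / 2 * ((k : ℝ) - 1) - L))⁻¹ ^ 5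
        ≤ (2 * a * (1 + u)) * ((r / 8 * (1 + u))⁻¹ ^ 5) := by
      apply mul_le_mul hcoef h5 (by positivity) (by positivity)
    have hid : (2 * a * (1 + u)) * ((r / 8 * (1 + u))⁻¹ ^ 5)
        = 2 * a * (8 / r) ^ 5 * ((1 + u)⁻¹ ^ 4) := by
      rw [mul_inv, mul_pow]
      have h1u : (1 + u) ≠ 0 := by positivity
      have hr8 : (r / 8)⁻¹ = 8 / r := by field_simp
      rw [hr8]
      field_simp
    rw [hid] at step1
    have hmono : (1 + u)⁻¹ ^ 4 ≤ ((((k - k₀ : ℕ) : ℝ)) + 1)⁻¹ ^ 4 := by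
      apply pow_le_pow_left₀ (by positivity)
      apply inv_anti₀ (by positivity) (by linarith)
    calc (2 * (k : ℝ) + 1) * (max 1 (1 + r / 2 * ((k : ℝ) - 1) - L))⁻¹ ^ 5
        ≤ 2 * a * (8 / r) ^ 5 * ((1 + u)⁻¹ ^ 4) := step1
      _ ≤ 2 * a * (8 / r) ^ 5 * (((((k - k₀ : ℕ) : ℝ)) + 1)⁻¹ ^ 4) :=
          mul_le_mul_of_nonneg_left hmono (by positivity)
      _ = 4 * L / r * (8 / r) ^ 5 * (((((k - k₀ : ℕ) : ℝ)) + 1)⁻¹ ^ 4) := by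
          rw [ha]; ring_nf
  calc ∑ k ∈ J, (2 * (k : ℝ) + 1) * (max 1 (1 + r / 2 * ((k : ℝ) - 1) - L))⁻¹ ^ 5
      ≤ ∑ k ∈ J, 4 * L / r * (8 / r) ^ 5 * ((((k - k₀ : ℕ) : ℝ) + 1)⁻¹ ^ 4) :=
        Finset.sum_le_sum hpt
    _ = 4 * L / r * (8 / r) ^ 5 * ∑ k ∈ J, (((k - k₀ : ℕ) : ℝ) + 1)⁻¹ ^ 4 := by
        rw [Finset.mul_sum]
    _ ≤ 4 * L / r * (8 / r) ^ 5 * Sig4 := by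
        apply mul_le_mul_of_nonneg_left _ (by positivity)
        have himg : ∑ k ∈ J, (((k - k₀ : ℕ) : ℝ) + 1)⁻¹ ^ 4
            = ∑ n ∈ J.image (fun k => k - k₀), ((n : ℝ) + 1)⁻¹ ^ 4 := by
          rw [Finset.sum_image]
          intro x hx y hy hxy
          have hx' := hkk₀ x hx
          have hy' := hkk₀ y hy
          beta_reduce at hxy
          omega
        rw [himg]
        exact summable_f4.sum_le_tsum _ (fun n _ => by positivity)

lemma branch_bound' (T : Finset (ℤ × ℤ)) (ψ : ℕ → ℝ) (hψ : ∀ k, 0 ≤ ψ k)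
    (hT : ∀ q ∈ T, q.2.natAbs ≤ q.1.natAbs) :
    ∑ q ∈ T, ψ q.1.natAbs
      ≤ ∑ k ∈ (T.image Prod.fst).image Int.natAbs, 2 * ((2 * (k : ℝ) + 1) * ψ k) := by
  classical
  have step1 : ∑ q ∈ T, ψ q.1.natAbs
      ≤ ∑ i ∈ T.image Prod.fst, (2 * (i.natAbs : ℝ) + 1) * ψ i.natAbs := by
    apply sum_comp_le' T Prod.fst (fun i => ψ i.natAbs) (fun i => 2 * (i.natAbs : ℝ) + 1)
      (fun i => hψ _)
    intro i _
    have hcard : (T.filter (fun q => q.1 = i)).card ≤ 2 * i.natAbs + 1 := by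
      have h1 : (T.filter (fun q => q.1 = i)).card
          ≤ (Finset.Icc (-(i.natAbs : ℤ)) (i.natAbs : ℤ)).card := by
        apply Finset.card_le_card_of_injOn Prod.snd
        · intro q hq
          obtain ⟨hqT, hqi⟩ := Finset.mem_filter.mp hq
          have h2 : (q.2.natAbs : ℤ) ≤ (i.natAbs : ℤ) := by
            exact_mod_cast hqi ▸ hT q hqT
          have h3 : |q.2| ≤ (i.natAbs : ℤ) := by
            rw [Int.abs_eq_natAbs]; exact h2
          rw [Finset.mem_coe, Finset.mem_Icc]
          exact ⟨neg_le_of_abs_le h3, le_of_abs_le h3⟩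
        · intro q hq q' hq' he
          have h1 := (Finset.mem_filter.mp (by exact_mod_cast hq)).2
          have h2 := (Finset.mem_filter.mp (by exact_mod_cast hq')).2
          exact Prod.ext (h1.trans h2.symm) he
      rw [Int.card_Icc] at h1
      omega
    calc ((T.filter (fun q => q.1 = i)).card : ℝ) ≤ ((2 * i.natAbs + 1 : ℕ) : ℝ) := by
          exact_mod_cast hcard
      _ = 2 * (i.natAbs : ℝ) + 1 := by push_cast; ring
  refine step1.trans ?_
  apply sum_comp_le' (T.image Prod.fst) Int.natAbs (fun k => (2 * (k : ℝ) + 1) * ψ k)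
    (fun _ => 2) (fun k => mul_nonneg (by positivity) (hψ k))
  intro k _
  have hcard : ((T.image Prod.fst).filter (fun i => i.natAbs = k)).card ≤ 2 := by
    have h1 : ((T.image Prod.fst).filter (fun i => i.natAbs = k)).card
        ≤ ({(k : ℤ), -(k : ℤ)} : Finset ℤ).card := by
      apply Finset.card_le_card_of_injOn id
      · intro i hi
        have h2 := (Finset.mem_filter.mp hi).2
        simp only [Finset.mem_coe, Finset.mem_insert, Finset.mem_singleton, id]
        omega
      · exact fun _ _ _ _ h => h
    calc _ ≤ ({(k : ℤ), -(k : ℤ)} : Finset ℤ).card := h1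
      _ ≤ 2 := Finset.card_insert_le _ _ |>.trans (by simp)
  exact_mod_cast hcard

lemma coord_le_norm (v : R2) (i : Fin 2) : |v i| ≤ ‖v‖ := by
  rw [EuclideanSpace.norm_eq]
  rw [show |v i| = Real.sqrt (‖v i‖ ^ 2) by
    rw [Real.sqrt_sq (norm_nonneg (v i)), Real.norm_eq_abs]]
  apply Real.sqrt_le_sqrt
  exact Finset.single_le_sum (f := fun j => ‖v j‖ ^ 2) (fun j _ => by positivity)
    (Finset.mem_univ i)

lemma measurableSet_Lam (L : ℝ) : MeasurableSet (Lam L) := by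
  have h0 : Measurable fun x : R2 => x 0 := (EuclideanSpace.proj (0 : Fin 2) : R2 →L[ℝ] ℝ).continuous.measurable
  have h1 : Measurable fun x : R2 => x 1 := (EuclideanSpace.proj (1 : Fin 2) : R2 →L[ℝ] ℝ).continuous.measurable
  have he : Lam L = {x : R2 | |x 0| ≤ L} ∩ {x : R2 | |x 1| ≤ L} := rfl
  rw [he]
  exact (measurableSet_le h0.abs measurable_const).inter
    (measurableSet_le h1.abs measurable_const)

lemma elem_bound (f : H2) (γ : R2) (s M' L : ℝ) (hs : 5 ≤ s) (hM' : 1 ≤ M')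
    (hloc : ∫⁻ x : R2, (‖(f : R2 → ℂ) x‖₊ : ENNReal) ^ 2
        * ENNReal.ofReal ((1 + ‖x - γ‖ ^ 2) ^ s) ≤ ENNReal.ofReal M')
    (hγ : γ ∉ Lam L) :
    Real.sqrt (∫ x in Lam L, ‖(f : R2 → ℂ) x‖ ^ 2)
      ≤ Real.sqrt M' * 2 ^ ((5:ℝ) / 2) * (max 1 (1 + (max |γ 0| |γ 1| - L)))⁻¹ ^ 5 := by
  set D : ℝ := max |γ 0| |γ 1| - L with hD
  have hD0 : 0 < D := by
    rw [hD]
    have hn : ¬(|γ 0| ≤ L ∧ |γ 1| ≤ L) := hγ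
    rcases not_and_or.mp hn with h | h
    · have h1 := lt_of_not_ge h; have h2 := le_max_left |γ 0| |γ 1|; linarith
    · have h1 := lt_of_not_ge h; have h2 := le_max_right |γ 0| |γ 1|; linarith
  have hDx : ∀ x ∈ Lam L, D ≤ ‖x - γ‖ := by
    intro x hx
    obtain ⟨hx0, hx1⟩ := hx
    have key : ∀ i : Fin 2, |x i| ≤ L → |γ i| - L ≤ ‖x - γ‖ := by
      intro i hxi
      calc |γ i| - L ≤ |γ i| - |x i| := by linarith
        _ ≤ |γ i - x i| := abs_sub_abs_le_abs_sub _ _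
        _ = |x i - γ i| := abs_sub_comm _ _
        _ = |(x - γ) i| := rfl
        _ ≤ ‖x - γ‖ := coord_le_norm _ _
    rcases max_cases |γ 0| |γ 1| with ⟨he, -⟩ | ⟨he, -⟩
    · rw [hD, he]; exact key 0 hx0
    · rw [hD, he]; exact key 1 hx1
  set c0 : ENNReal := ENNReal.ofReal ((1 + D ^ 2) ^ s) with hc0
  have hptw : ∀ x ∈ Lam L, c0 ≤ ENNReal.ofReal ((1 + ‖x - γ‖ ^ 2) ^ s) := by
    intro x hx
    apply ENNReal.ofReal_le_ofReal
    apply Real.rpow_le_rpow (by positivity) _ (by linarith)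
    have h1 := hDx x hx
    nlinarith [norm_nonneg (x - γ)]
  set I : ENNReal := ∫⁻ x in Lam L, (‖(f : R2 → ℂ) x‖₊ : ENNReal) ^ 2 with hI
  have key : I * c0 ≤ ENNReal.ofReal M' := by
    calc I * c0 = ∫⁻ x in Lam L, (‖(f : R2 → ℂ) x‖₊ : ENNReal) ^ 2 * c0 :=
        (lintegral_mul_const' c0 _ (by rw [hc0]; exact ENNReal.ofReal_ne_top)).symm
      _ ≤ ∫⁻ x in Lam L, (‖(f : R2 → ℂ) x‖₊ : ENNReal) ^ 2
            * ENNReal.ofReal ((1 + ‖x - γ‖ ^ 2) ^ s) := by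
          apply lintegral_mono_ae
          filter_upwards [ae_restrict_mem (measurableSet_Lam L)] with x hx
          exact mul_le_mul_right (hptw x hx) _
      _ ≤ ∫⁻ x : R2, (‖(f : R2 → ℂ) x‖₊ : ENNReal) ^ 2
            * ENNReal.ofReal ((1 + ‖x - γ‖ ^ 2) ^ s) :=
          setLIntegral_le_lintegral _ _
      _ ≤ ENNReal.ofReal M' := hloc
  have hBeq : ∫ x in Lam L, ‖(f : R2 → ℂ) x‖ ^ 2 = I.toReal := by
    rw [hI, integral_eq_lintegral_of_nonneg_ae
      (Filter.Eventually.of_forall fun x => by positivity)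
      (by
        have := (Lp.aestronglyMeasurable f).norm
        exact ((this.pow 2).restrict))]
    congr 1
    apply lintegral_congr
    intro x
    rw [ENNReal.ofReal_pow (norm_nonneg _), ofReal_norm, enorm_eq_nnnorm]
  have hreal : I.toReal * (1 + D ^ 2) ^ s ≤ M' := by
    have h1 := ENNReal.toReal_mono ENNReal.ofReal_ne_top key
    rw [ENNReal.toReal_mul, hc0, ENNReal.toReal_ofReal (Real.rpow_nonneg (by positivity) s),
      ENNReal.toReal_ofReal (by linarith)] at h1
    exact h1
  have hpos : (0:ℝ) < (1 + D ^ 2) ^ s := Real.rpow_pos_of_pos (by positivity) s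
  have hBle : ∫ x in Lam L, ‖(f : R2 → ℂ) x‖ ^ 2 ≤ M' / (1 + D ^ 2) ^ s := by
    rw [hBeq, le_div_iff₀ hpos]; exact hreal
  have hsqrtpow : Real.sqrt ((1 + D ^ 2) ^ s) = (1 + D ^ 2) ^ (s / 2) := by
    rw [Real.sqrt_eq_rpow, ← Real.rpow_mul (by positivity)]
    rw [show s * (1 / 2) = s / 2 by ring]
  have hsq : Real.sqrt (∫ x in Lam L, ‖(f : R2 → ℂ) x‖ ^ 2)
      ≤ Real.sqrt M' / (1 + D ^ 2) ^ (s / 2) := by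
    have h2 := Real.sqrt_le_sqrt hBle
    rwa [Real.sqrt_div (by linarith : (0:ℝ) ≤ M'), hsqrtpow] at h2
  have hden : (1 + D) ^ 5 / 2 ^ ((5:ℝ) / 2) ≤ (1 + D ^ 2) ^ (s / 2) := by
    have h1 : (1 + D ^ 2) ^ ((5:ℝ) / 2) ≤ (1 + D ^ 2) ^ (s / 2) :=
      Real.rpow_le_rpow_of_exponent_le (by nlinarith) (by linarith)
    have h2 : ((1 + D) ^ 2 / 2 : ℝ) ≤ 1 + D ^ 2 := by nlinarith [sq_nonneg (1 - D)]
    have h3 : (((1 + D) ^ 2 / 2 : ℝ)) ^ ((5:ℝ) / 2) ≤ (1 + D ^ 2) ^ ((5:ℝ) / 2) :=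
      Real.rpow_le_rpow (by positivity) h2 (by norm_num)
    have h4 : (((1 + D) ^ 2 / 2 : ℝ)) ^ ((5:ℝ) / 2) = (1 + D) ^ 5 / 2 ^ ((5:ℝ) / 2) := by
      rw [Real.div_rpow (by positivity) (by norm_num)]
      congr 1
      rw [← Real.rpow_natCast (1 + D) 2, ← Real.rpow_mul (by linarith)]
      rw [show ((2:ℕ):ℝ) * ((5:ℝ) / 2) = ((5:ℕ):ℝ) by push_cast; ring, Real.rpow_natCast]
    calc (1 + D) ^ 5 / 2 ^ ((5:ℝ) / 2) = (((1 + D) ^ 2 / 2 : ℝ)) ^ ((5:ℝ) / 2) := h4.symm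
      _ ≤ (1 + D ^ 2) ^ ((5:ℝ) / 2) := h3
      _ ≤ (1 + D ^ 2) ^ (s / 2) := h1
  have hd2 : (0:ℝ) < (1 + D) ^ 5 / 2 ^ ((5:ℝ) / 2) := by positivity
  have hfinal : Real.sqrt M' / (1 + D ^ 2) ^ (s / 2)
      ≤ Real.sqrt M' * 2 ^ ((5:ℝ) / 2) * ((1 + D)⁻¹) ^ 5 := by
    calc Real.sqrt M' / (1 + D ^ 2) ^ (s / 2)
        ≤ Real.sqrt M' / ((1 + D) ^ 5 / 2 ^ ((5:ℝ) / 2)) :=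
          div_le_div_of_nonneg_left (Real.sqrt_nonneg _) hd2 hden
      _ = Real.sqrt M' * 2 ^ ((5:ℝ) / 2) * ((1 + D)⁻¹) ^ 5 := by
          rw [inv_pow, div_div_eq_mul_div, div_eq_mul_inv]
          try ring
  have hmax : max 1 (1 + D) = 1 + D := max_eq_right (by linarith)
  rw [hmax]
  exact hsq.trans hfinal

/-- mass inside. For a GWB of an exponentially localized projection which is
`s`-localized around an `r`-uniformly discrete set `𝔇` with `s > 5`, there is `I_MI > 0` such
that for every `L ≥ 1` the sum over `ξ ∈ 𝔇 \ Λ_L` (and `1 ≤ c ≤ m(ξ)`) of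
`‖χ_{Λ_L} w_{ξ,c}‖_{L²}` is at most `I_MI · L`. -/
theorem statement_11
    (P : H2 →L[ℂ] H2) (hP : IsOrthProj P)
    (p : R2 → R2 → ℂ) (C β : ℝ) (hp : IsExpLocKernel p C β) (hker : HasKernel P p)
    (𝔇 : Set R2) (r : ℝ) (h𝔇 : UnifDiscrete 𝔇 r)
    (s : ℝ) (hs : 5 < s)
    (m : R2 → ℕ) (mStar : ℕ) (w : (γ : R2) → Fin (m γ) → H2) (M : ℝ)
    (hGWB : IsGWB P 𝔇 m mStar w (fun t => (1 + t ^ 2) ^ s) M) :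
    ∃ IMI : ℝ, 0 < IMI ∧ ∀ L : ℝ, 1 ≤ L →
      ∀ F : Finset (WIdx 𝔇 m), (∀ σ ∈ F, (σ.1 : R2) ∉ Lam L) →
        ∑ σ ∈ F, Real.sqrt (∫ x in Lam L, ‖(w (σ.1 : R2) σ.2 : R2 → ℂ) x‖ ^ 2)
          ≤ IMI * L := by
  classical
  obtain ⟨hm, -, -, -, hloc⟩ := hGWB
  obtain ⟨hr0, hr⟩ := h𝔇
  set r' : ℝ := min r 1 with hr'def
  have hr'0 : 0 < r' := lt_min hr0 one_pos
  have hr'1 : r' ≤ 1 := min_le_right _ _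
  have hsep : ∀ γ ∈ 𝔇, ∀ δ ∈ 𝔇, dist γ δ < r' → γ = δ := by
    intro γ hγ δ hδ hd
    refine hr γ ⟨hγ, Metric.mem_ball.mpr ?_⟩ ⟨hδ, Metric.mem_ball.mpr ?_⟩
    · rw [dist_self]; exact hr0
    · rw [dist_comm]; exact lt_of_lt_of_le hd (min_le_left _ _)
  set M' : ℝ := max M 1 with hM'def
  have hM'1 : 1 ≤ M' := le_max_right _ _
  set c₁ : ℝ := Real.sqrt M' * 2 ^ ((5:ℝ) / 2) with hc₁
  have hc₁0 : 0 ≤ c₁ := by positivity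
  set Cf : ℝ := c₁ * mStar * 16 * (8 / r') ^ 5 * Sig4 / r' with hCf
  refine ⟨max 1 Cf, lt_of_lt_of_le one_pos (le_max_left _ _), ?_⟩
  intro L hL F hF
  set h : ℝ := r' / 2 with hhdef
  have hh0 : 0 < h := by positivity
  set G : R2 → ℝ := fun γ => (max 1 (1 + (max |γ 0| |γ 1| - L)))⁻¹ ^ 5 with hG
  have hG0 : ∀ γ : R2, 0 ≤ G γ := fun γ => by positivity
  set ψ : ℕ → ℝ := fun k => (max 1 (1 + r' / 2 * ((k : ℝ) - 1) - L))⁻¹ ^ 5 with hψ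
  have hψ0 : ∀ k, 0 ≤ ψ k := fun k => by positivity
  set φ : 𝔇 → ℤ × ℤ := fun γ => (⌊(γ : R2) 0 / h⌋, ⌊(γ : R2) 1 / h⌋) with hφ
  set K : ℤ × ℤ → ℕ := fun q => max q.1.natAbs q.2.natAbs with hK
  -- per-element bound
  have key1 : ∀ σ ∈ F, Real.sqrt (∫ x in Lam L, ‖(w (σ.1 : R2) σ.2 : R2 → ℂ) x‖ ^ 2)
      ≤ c₁ * G (σ.1 : R2) := by
    intro σ hσ
    have hlocσ := hloc (σ.1 : R2) σ.1.2 σ.2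
    have hloc' : ∫⁻ x : R2, (‖(w (σ.1 : R2) σ.2 : R2 → ℂ) x‖₊ : ENNReal) ^ 2
        * ENNReal.ofReal ((1 + ‖x - (σ.1 : R2)‖ ^ 2) ^ s) ≤ ENNReal.ofReal M' := by
      refine le_trans ?_ (ENNReal.ofReal_le_ofReal (le_max_left M 1))
      exact hlocσ
    exact elem_bound _ _ s M' L hs.le hM'1 hloc' (hF σ hσ)
  -- group by center
  set Ξ : Finset 𝔇 := F.image Sigma.fst with hΞdef
  have hΞout : ∀ γ ∈ Ξ, (γ : R2) ∉ Lam L := by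
    intro γ hγ
    obtain ⟨σ, hσF, hσγ⟩ := Finset.mem_image.mp hγ
    exact hσγ ▸ hF σ hσF
  have step2 : ∑ σ ∈ F, G (σ.1 : R2) ≤ ∑ γ ∈ Ξ, (mStar : ℝ) * G (γ : R2) := by
    apply sum_comp_le' F Sigma.fst (fun γ : 𝔇 => G (γ : R2)) (fun _ => (mStar : ℝ))
      (fun γ => hG0 _)
    intro γ₀ hγ₀
    have hcard : (F.filter (fun σ => σ.1 = γ₀)).card ≤ mStar := by
      have h1 : (F.filter (fun σ => σ.1 = γ₀)).card ≤ (Finset.range (m (γ₀ : R2))).card := by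
        apply Finset.card_le_card_of_injOn (fun σ => (σ.2 : ℕ))
        · rintro ⟨γσ, aσ⟩ hσ
          have he : γσ = γ₀ := (Finset.mem_filter.mp hσ).2
          subst he
          exact Finset.mem_range.mpr aσ.isLt
        · rintro ⟨γσ, aσ⟩ hσ ⟨γτ, aτ⟩ hτ he2
          have h1 : γσ = γ₀ := (Finset.mem_filter.mp (Finset.mem_coe.mp hσ)).2
          have h2 : γτ = γ₀ := (Finset.mem_filter.mp (Finset.mem_coe.mp hτ)).2
          subst h1
          subst h2
          exact congrArg _ (Fin.ext he2)
      rw [Finset.card_range] at h1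
      exact h1.trans (hm _ γ₀.2)
    exact_mod_cast hcard
  -- compare G with lattice weight ψ ∘ K ∘ φ
  have hGψ : ∀ γ ∈ Ξ, G (γ : R2) ≤ ψ (K (φ γ)) := by
    intro γ hγ
    have hlow : ((K (φ γ) : ℝ) - 1) * h ≤ max |(γ : R2) 0| |(γ : R2) 1| := by
      rcases max_choice (⌊(γ : R2) 0 / h⌋.natAbs) (⌊(γ : R2) 1 / h⌋.natAbs) with he | he
      · calc ((K (φ γ) : ℝ) - 1) * h = ((⌊(γ : R2) 0 / h⌋.natAbs : ℝ) - 1) * h := by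
              rw [hK, hφ]; simp only []; rw [he]
          _ ≤ |(γ : R2) 0| := cell_le_abs' hh0
          _ ≤ max |(γ : R2) 0| |(γ : R2) 1| := le_max_left _ _
      · calc ((K (φ γ) : ℝ) - 1) * h = ((⌊(γ : R2) 1 / h⌋.natAbs : ℝ) - 1) * h := by
              rw [hK, hφ]; simp only []; rw [he]
          _ ≤ |(γ : R2) 1| := cell_le_abs' hh0
          _ ≤ max |(γ : R2) 0| |(γ : R2) 1| := le_max_right _ _
    have harg : 1 + r' / 2 * ((K (φ γ) : ℝ) - 1) - L
        ≤ 1 + (max |(γ : R2) 0| |(γ : R2) 1| - L) := by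
      have h1 : r' / 2 * ((K (φ γ) : ℝ) - 1) = ((K (φ γ) : ℝ) - 1) * h := by
        rw [hhdef]; ring
      rw [h1]; linarith
    rw [hG, hψ]
    apply pow_le_pow_left₀ (by positivity)
    exact inv_anti₀ (lt_of_lt_of_le one_pos (le_max_left _ _))
      (max_le_max le_rfl harg)
  -- the K-property of lattice points
  have hQprop : ∀ γ ∈ Ξ, L < ((K (φ γ) : ℝ) + 1) * h := by
    intro γ hγ
    have hout := hΞout γ hγ
    have hmaxγ : L < max |(γ : R2) 0| |(γ : R2) 1| := by
      rcases not_and_or.mp hout with hc | hc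
      · exact lt_of_lt_of_le (lt_of_not_ge hc) (le_max_left _ _)
      · exact lt_of_lt_of_le (lt_of_not_ge hc) (le_max_right _ _)
    have hup : max |(γ : R2) 0| |(γ : R2) 1| ≤ ((K (φ γ) : ℝ) + 1) * h := by
      apply max_le
      · calc |(γ : R2) 0| ≤ ((⌊(γ : R2) 0 / h⌋.natAbs : ℝ) + 1) * h := abs_le_cell' hh0
          _ ≤ ((K (φ γ) : ℝ) + 1) * h := by
              have h1 : (⌊(γ : R2) 0 / h⌋.natAbs : ℝ) ≤ (K (φ γ) : ℝ) := by
                exact_mod_cast le_max_left _ _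
              nlinarith
      · calc |(γ : R2) 1| ≤ ((⌊(γ : R2) 1 / h⌋.natAbs : ℝ) + 1) * h := abs_le_cell' hh0
          _ ≤ ((K (φ γ) : ℝ) + 1) * h := by
              have h1 : (⌊(γ : R2) 1 / h⌋.natAbs : ℝ) ≤ (K (φ γ) : ℝ) := by
                exact_mod_cast le_max_right _ _
              nlinarith
    linarith
  -- injectivity of the lattice map
  have hφinj : Set.InjOn φ ↑Ξ := by
    intro γ hγ δ hδ he
    have h0 : |(γ : R2) 0 - (δ : R2) 0| < h := same_cell' hh0 (congrArg Prod.fst he)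
    have h1 : |(γ : R2) 1 - (δ : R2) 1| < h := same_cell' hh0 (congrArg Prod.snd he)
    have hdist : dist (γ : R2) (δ : R2) < r' := by
      rw [EuclideanSpace.dist_eq]
      have hsum : ∑ i : Fin 2, dist ((γ : R2) i) ((δ : R2) i) ^ 2 < r' ^ 2 := by
        rw [Fin.sum_univ_two, Real.dist_eq, Real.dist_eq]
        have e0 : |(γ : R2) 0 - (δ : R2) 0| ^ 2 < h ^ 2 := by
          apply sq_lt_sq' _ h0
          have := abs_nonneg ((γ : R2) 0 - (δ : R2) 0); linarith
        have e1 : |(γ : R2) 1 - (δ : R2) 1| ^ 2 < h ^ 2 := by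
          apply sq_lt_sq' _ h1
          have := abs_nonneg ((γ : R2) 1 - (δ : R2) 1); linarith
        have hh2 : h ^ 2 = r' ^ 2 / 4 := by rw [hhdef]; ring
        nlinarith
      calc Real.sqrt (∑ i : Fin 2, dist ((γ : R2) i) ((δ : R2) i) ^ 2)
          < Real.sqrt (r' ^ 2) := by
            apply Real.sqrt_lt_sqrt _ hsum
            apply Finset.sum_nonneg
            intro i _
            positivity
        _ = r' := Real.sqrt_sq hr'0.le
    exact Subtype.ext (hsep _ γ.2 _ δ.2 hdist)
  -- pass to the lattice
  set Q : Finset (ℤ × ℤ) := Ξ.image φ with hQdef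
  have sumQ : ∑ q ∈ Q, ψ (K q) = ∑ γ ∈ Ξ, ψ (K (φ γ)) := by
    rw [hQdef]
    exact Finset.sum_image (fun x hx y hy hxy =>
      hφinj (Finset.mem_coe.mpr hx) (Finset.mem_coe.mpr hy) hxy)
  have hQK : ∀ q ∈ Q, L < ((K q : ℝ) + 1) * h := by
    intro q hq
    obtain ⟨γ, hγ, hγq⟩ := Finset.mem_image.mp hq
    exact hγq ▸ hQprop γ hγ
  -- split by dominating coordinate
  set Q1 : Finset (ℤ × ℤ) := Q.filter (fun q => q.2.natAbs ≤ q.1.natAbs) with hQ1def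
  set Q2 : Finset (ℤ × ℤ) := Q.filter (fun q => ¬ q.2.natAbs ≤ q.1.natAbs) with hQ2def
  have hsplit : ∑ q ∈ Q, ψ (K q) = ∑ q ∈ Q1, ψ (K q) + ∑ q ∈ Q2, ψ (K q) :=
    (Finset.sum_filter_add_sum_filter_not Q _ _).symm
  have hQ1eq : ∑ q ∈ Q1, ψ (K q) = ∑ q ∈ Q1, ψ q.1.natAbs := by
    apply Finset.sum_congr rfl
    intro q hq
    have hle := (Finset.mem_filter.mp hq).2
    rw [hK]
    simp only []
    rw [max_eq_left hle]
  have hQ2eq : ∑ q ∈ Q2, ψ (K q) = ∑ q ∈ Q2, ψ q.2.natAbs := by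
    apply Finset.sum_congr rfl
    intro q hq
    have hle := le_of_not_ge (Finset.mem_filter.mp hq).2
    rw [hK]
    simp only []
    rw [max_eq_right hle]
  set Q2' : Finset (ℤ × ℤ) := Q2.image Prod.swap with hQ2'def
  have hswap : ∑ q ∈ Q2, ψ q.2.natAbs = ∑ q ∈ Q2', ψ q.1.natAbs := by
    rw [hQ2'def]
    rw [Finset.sum_image (fun x _ y _ hxy => Prod.swap_injective hxy)]
    simp
  -- branch 1
  have hbr1 : ∑ q ∈ Q1, ψ q.1.natAbs
      ≤ ∑ k ∈ (Q1.image Prod.fst).image Int.natAbs, 2 * ((2 * (k : ℝ) + 1) * ψ k) :=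
    branch_bound' Q1 ψ hψ0 (fun q hq => (Finset.mem_filter.mp hq).2)
  have hbr2 : ∑ q ∈ Q2', ψ q.1.natAbs
      ≤ ∑ k ∈ (Q2'.image Prod.fst).image Int.natAbs, 2 * ((2 * (k : ℝ) + 1) * ψ k) := by
    apply branch_bound' Q2' ψ hψ0
    intro q hq
    obtain ⟨q', hq', hq'q⟩ := Finset.mem_image.mp hq
    have hle := le_of_not_ge (Finset.mem_filter.mp hq').2
    rw [← hq'q]
    simpa using (lt_of_not_ge (Finset.mem_filter.mp hq').2).le
  -- J-properties
  have hJ1 : ∀ k ∈ (Q1.image Prod.fst).image Int.natAbs, L < ((k : ℝ) + 1) * (r' / 2) := by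
    intro k hk
    obtain ⟨i, hi, hik⟩ := Finset.mem_image.mp hk
    obtain ⟨q, hq, hqi⟩ := Finset.mem_image.mp hi
    have hle := (Finset.mem_filter.mp hq).2
    have hKq : K q = k := by
      rw [hK]; simp only []
      rw [max_eq_left hle, hqi, hik]
    have := hQK q (Finset.mem_of_mem_filter q hq)
    rw [hKq] at this
    rw [← hhdef]
    exact this
  have hJ2 : ∀ k ∈ (Q2'.image Prod.fst).image Int.natAbs, L < ((k : ℝ) + 1) * (r' / 2) := by
    intro k hk
    obtain ⟨i, hi, hik⟩ := Finset.mem_image.mp hk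
    obtain ⟨q, hq, hqi⟩ := Finset.mem_image.mp hi
    obtain ⟨q', hq', hq'q⟩ := Finset.mem_image.mp hq
    have hlt := lt_of_not_ge (Finset.mem_filter.mp hq').2
    have hKq : K q' = k := by
      rw [hK]; simp only []
      rw [max_eq_right hlt.le, ← hik, ← hqi, ← hq'q]
      rfl
    have := hQK q' (Finset.mem_of_mem_filter q' hq')
    rw [hKq] at this
    rw [← hhdef]
    exact this
  -- tail bounds
  have htail1 : ∑ k ∈ (Q1.image Prod.fst).image Int.natAbs, 2 * ((2 * (k : ℝ) + 1) * ψ k)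
      ≤ 2 * (4 * L / r' * (8 / r') ^ 5 * Sig4) := by
    rw [← Finset.mul_sum]
    apply mul_le_mul_of_nonneg_left _ (by norm_num)
    exact tail_bound' hr'0 hr'1 hL _ hJ1
  have htail2 : ∑ k ∈ (Q2'.image Prod.fst).image Int.natAbs, 2 * ((2 * (k : ℝ) + 1) * ψ k)
      ≤ 2 * (4 * L / r' * (8 / r') ^ 5 * Sig4) := by
    rw [← Finset.mul_sum]
    apply mul_le_mul_of_nonneg_left _ (by norm_num)
    exact tail_bound' hr'0 hr'1 hL _ hJ2
  -- assemble
  have hΞψ : ∑ γ ∈ Ξ, G (γ : R2) ≤ 4 * (4 * L / r' * (8 / r') ^ 5 * Sig4) := by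
    calc ∑ γ ∈ Ξ, G (γ : R2) ≤ ∑ γ ∈ Ξ, ψ (K (φ γ)) := Finset.sum_le_sum hGψ
      _ = ∑ q ∈ Q, ψ (K q) := sumQ.symm
      _ = ∑ q ∈ Q1, ψ (K q) + ∑ q ∈ Q2, ψ (K q) := hsplit
      _ = ∑ q ∈ Q1, ψ q.1.natAbs + ∑ q ∈ Q2', ψ q.1.natAbs := by rw [hQ1eq, hQ2eq, hswap]
      _ ≤ 2 * (4 * L / r' * (8 / r') ^ 5 * Sig4) + 2 * (4 * L / r' * (8 / r') ^ 5 * Sig4) := by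
          exact add_le_add (hbr1.trans htail1) (hbr2.trans htail2)
      _ = 4 * (4 * L / r' * (8 / r') ^ 5 * Sig4) := by ring
  calc ∑ σ ∈ F, Real.sqrt (∫ x in Lam L, ‖(w (σ.1 : R2) σ.2 : R2 → ℂ) x‖ ^ 2)
      ≤ ∑ σ ∈ F, c₁ * G (σ.1 : R2) := Finset.sum_le_sum key1
    _ = c₁ * ∑ σ ∈ F, G (σ.1 : R2) := by rw [Finset.mul_sum]
    _ ≤ c₁ * ∑ γ ∈ Ξ, (mStar : ℝ) * G (γ : R2) := mul_le_mul_of_nonneg_left step2 hc₁0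
    _ = c₁ * ((mStar : ℝ) * ∑ γ ∈ Ξ, G (γ : R2)) := by
        simp [Finset.mul_sum, mul_assoc]
    _ ≤ c₁ * ((mStar : ℝ) * (4 * (4 * L / r' * (8 / r') ^ 5 * Sig4))) := by
        apply mul_le_mul_of_nonneg_left _ hc₁0
        exact mul_le_mul_of_nonneg_left hΞψ (Nat.cast_nonneg _)
    _ = Cf * L := by rw [hCf]; field_simp; ring
    _ ≤ max 1 Cf * L := mul_le_mul_of_nonneg_right (le_max_right _ _) (by linarith)

end
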